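/- The function s ↦ q(s)² is integrable over ℝ, i.e. ∫_{-∞}^{∞} q(s)² ds < ∞. -/

import Mathlib

open MeasureTheory Filter Real Set Topology

lemma barrier {f f' : ℝ → ℝ} {x₀ : ℝ}
    (hf : ∀ t, HasDerivAt f (f' t) t)
    (h0 : f x₀ ≤ 0) (hb : ∀ t, x₀ ≤ t → f t = 0 → f' t < 0) :
    ∀ x, x₀ ≤ x → f x ≤ 0 := by
  have hcont : Continuous f := by
    apply continuous_iff_continuousAt.mpr
    exact fun s => (hf s).continuousAt
  intro x hx
  by_contra hfx
  push_neg at hfx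
  set Z := {s : ℝ | x₀ ≤ s ∧ s ≤ x ∧ 0 < f s} with hZ
  have hne : Z.Nonempty := ⟨x, hx, le_refl _, hfx⟩
  have hbdd : BddBelow Z := ⟨x₀, fun s hs => hs.1⟩
  set t := sInf Z with htdef
  have ht0 : x₀ ≤ t := le_csInf hne fun s hs => hs.1
  have htx : t ≤ x := csInf_le hbdd ⟨hx, le_refl _, hfx⟩
  have hcl : t ∈ closure Z := csInf_mem_closure hne hbdd
  have hge : 0 ≤ f t := by
    have h1 : closure Z ⊆ {s | 0 ≤ f s} :=
      closure_minimal (fun s hs => hs.2.2.le) (isClosed_le continuous_const hcont)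
    exact h1 hcl
  have hle : f t ≤ 0 := by
    rcases eq_or_lt_of_le ht0 with h | h
    · rw [← h]; exact h0
    · have hev : ∀ᶠ s in 𝓝[<] t, f s ≤ 0 := by
        filter_upwards [Ioo_mem_nhdsLT_of_mem (Set.mem_Ioc.mpr ⟨h, le_refl t⟩)] with s hs
        by_contra hpos
        push_neg at hpos
        have hsZ : s ∈ Z := ⟨hs.1.le, le_trans hs.2.le htx, hpos⟩
        exact absurd (csInf_le hbdd hsZ) (not_le.mpr hs.2)
      exact le_of_tendsto (hcont.continuousAt.tendsto.mono_left nhdsWithin_le_nhds) hev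
  have hft : f t = 0 := le_antisymm hle hge
  have hd := hb t ht0 hft
  have hslope : Tendsto (slope f t) (𝓝[>] t) (𝓝 (f' t)) :=
    (hasDerivAt_iff_tendsto_slope.mp (hf t)).mono_left
      (nhdsWithin_mono t fun s hs => ne_of_gt hs)
  have hev : ∀ᶠ s in 𝓝[>] t, slope f t s < 0 := hslope.eventually (eventually_lt_nhds hd)
  have hev2 : ∀ᶠ s in 𝓝[>] t, f s < 0 := by
    filter_upwards [hev, self_mem_nhdsWithin] with s hs hs2
    have h1 : 0 < s - t := sub_pos.mpr hs2
    rw [slope_def_field] at hs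
    rw [div_neg_iff] at hs
    rcases hs with ⟨h2, h3⟩ | ⟨h2, h3⟩
    · linarith
    · rw [hft, sub_zero] at h2; linarith
  rcases (eventually_nhdsWithin_iff.mp hev2).exists_mem with ⟨U, hU, hUsub⟩
  rcases mem_nhds_iff_exists_Ioo_subset.mp hU with ⟨l, u, htlu, hsub⟩
  have htu : t < u := htlu.2
  obtain ⟨z, hzZ, hzu⟩ := (csInf_lt_iff hbdd hne).mp htu
  have hzt : t ≤ z := csInf_le hbdd hzZ
  have hzt' : t < z := lt_of_le_of_ne hzt (by rintro rfl; exact absurd hft (ne_of_gt hzZ.2.2))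
  have : f z < 0 := hUsub z (hsub ⟨lt_trans htlu.1 hzt', hzu⟩) hzt'
  exact absurd hzZ.2.2 (not_lt.mpr this.le)

lemma anti_aux {f f' : ℝ → ℝ} {x₀ : ℝ} (hf : ∀ t, x₀ ≤ t → HasDerivAt f (f' t) t)
    (hle : ∀ t, x₀ < t → f' t ≤ 0) : AntitoneOn f (Ici x₀) := by
  apply antitoneOn_of_deriv_nonpos (convex_Ici x₀)
  · exact fun t ht => (hf t ht).continuousAt.continuousWithinAt
  · intro t ht
    rw [interior_Ici] at ht
    exact (hf t ht.le).differentiableAt.differentiableWithinAt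
  · intro t ht
    rw [interior_Ici] at ht
    rw [(hf t ht.le).deriv]
    exact hle t ht

set_option maxHeartbeats 2000000 in
lemma key (a μ : ℝ) (ha : 0 < a) (hμ : 1 / 3 < μ)
    (q : ℝ → ℝ) (hq : ContDiff ℝ 2 q)
    (hode : ∀ s : ℝ, deriv (deriv q) s * q s + a * s * deriv q s * q s
      + μ * q s + (1 / 3) * s * deriv q s = 0)
    (hq0' : deriv q 0 = 0)
    (hpos : ∀ s : ℝ, 0 < q s) :
    IntegrableOn (fun s : ℝ => q s ^ 2) (Ici 0) := by
  have hq1 : Differentiable ℝ q := hq.differentiable (by norm_num)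
  have hq1' : Differentiable ℝ (deriv q) := by
    have h := (contDiff_succ_iff_deriv (n := 1)).mp (by norm_num; exact hq)
    exact h.2.2.differentiable (by norm_num)
  have hdq : ∀ t, HasDerivAt q (deriv q t) t := fun t => (hq1 t).hasDerivAt
  have hdq' : ∀ t, HasDerivAt (deriv q) (deriv (deriv q) t) t := fun t => (hq1' t).hasDerivAt
  have hq2 : ∀ s, deriv (deriv q) s = -μ - a * s * deriv q s - s * deriv q s / (3 * q s) := by
    intro s
    have h := hode s
    have hqs : q s ≠ 0 := (hpos s).ne'
    field_simp
    linarith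
  -- Step 1 : deriv q ≤ 0 on [0, ∞)
  have hq'np : ∀ s, 0 ≤ s → deriv q s ≤ 0 := by
    apply barrier hdq' (by rw [hq0'])
    intro t ht h0
    rw [hq2 t, h0]
    have : -μ - a * t * 0 - t * 0 / (3 * q t) = -μ := by ring
    rw [this]
    linarith
  have hanti : AntitoneOn q (Ici 0) := anti_aux (fun t _ => hdq t) fun t ht => hq'np t ht.le
  -- constants
  obtain ⟨δ, hδdef⟩ : ∃ δ : ℝ, δ = 2 * (μ - 1/4) / (3 * a) := ⟨_, rfl⟩
  have hμ4 : 0 < μ - 1/4 := by linarith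
  have hδ : 0 < δ := by rw [hδdef]; positivity
  obtain ⟨m, hmdef⟩ : ∃ m : ℝ, m = (μ - 1/4) / 2 := ⟨_, rfl⟩
  have hm : 0 < m := by rw [hmdef]; positivity
  -- Step 2 : there is σ > 0 with q σ < δ
  have hsigma : ∃ σ, 0 < σ ∧ q σ < δ := by
    by_contra hAcase
    push_neg at hAcase
    obtain ⟨c, hcdef⟩ : ∃ c : ℝ, c = a + 1 / (3 * δ) := ⟨_, rfl⟩
    have hc : 0 < c := by rw [hcdef]; positivity
    obtain ⟨k, hkdef⟩ : ∃ k : ℝ, k = μ / (2 * c) := ⟨_, rfl⟩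
    have hk : 0 < k := by rw [hkdef]; positivity
    have hqpp : ∀ s, 0 < s → -(s * deriv q s) ≤ k → deriv (deriv q) s ≤ -μ/2 := by
      intro s hs hsk
      rw [hq2 s]
      have hδq : δ ≤ q s := hAcase s hs
      have hqs : 0 < q s := hpos s
      have h1 : -(s * deriv q s) * a ≤ k * a := by nlinarith
      have h2 : -(s * deriv q s) / (3 * q s) ≤ k / (3 * δ) := by
        rw [div_le_div_iff₀ (by positivity) (by positivity)]
        nlinarith
      have hkc : k * a + k / (3 * δ) = μ / 2 := by
        rw [hkdef, hcdef]
        field_simp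
      ring_nf at h1 h2 hkc ⊢
      linarith [h1, h2]
    -- entry point : some s₂ > 0 with s₂ * q' s₂ < -k
    obtain ⟨S, hSdef⟩ : ∃ S : ℝ, S = Real.sqrt (2 * k / μ) + 1 := ⟨_, rfl⟩
    have hS : 0 < S := by
      rw [hSdef]; positivity
    have hS2 : 2 * k / μ < S ^ 2 := by
      have h0 : 0 ≤ 2 * k / μ := by positivity
      have h1 := Real.sq_sqrt h0
      rw [hSdef]
      nlinarith [Real.sqrt_nonneg (2 * k / μ)]
    have hSk : k < μ * S ^ 2 / 2 := by
      rw [div_lt_iff₀ (by linarith : (0:ℝ) < μ)] at hS2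
      nlinarith [hS2]
    have hE : ∃ s₂, 0 < s₂ ∧ s₂ * deriv q s₂ < -k := by
      by_contra hcon
      push_neg at hcon
      have hwanti : AntitoneOn (fun s => deriv q s + μ/2 * s) (Ici 0) := by
        apply anti_aux (f' := fun t => deriv (deriv q) t + μ/2)
        · intro t _
          have h2 : HasDerivAt (fun s : ℝ => μ/2 * s) (μ/2) t := by
            simpa using (hasDerivAt_id t).const_mul (μ/2)
          exact (hdq' t).add h2
        · intro t ht
          have := hqpp t ht (by linarith [hcon t ht])
          linarith
      have hw := hwanti (self_mem_Ici) (mem_Ici.mpr hS.le) hS.le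
      simp only [hq0'] at hw
      have hq'S : deriv q S ≤ -(μ/2) * S := by linarith
      have h3 := mul_le_mul_of_nonneg_left hq'S hS.le
      have h4 : S * deriv q S ≤ -(μ * S^2/2) := by nlinarith [h3]
      linarith [hcon S hS, hSk]
    obtain ⟨s₂, hs₂, hks⟩ := hE
    -- barrier : s * q' s ≤ -k for all s ≥ s₂
    have hbar : ∀ s, s₂ ≤ s → s * deriv q s + k ≤ 0 := by
      apply barrier (f' := fun s => deriv q s + s * deriv (deriv q) s)
      · intro t
        have h1 : HasDerivAt (fun s : ℝ => s * deriv q s) (deriv q t + t * deriv (deriv q) t) t := by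
          have h0 := (hasDerivAt_id t).fun_mul (hdq' t)
          simp only [id_eq, one_mul] at h0
          convert h0 using 1 <;> ring
        exact h1.add_const k
      · linarith
      · intro t ht hft
        have htpos : 0 < t := lt_of_lt_of_le hs₂ ht
        have hq'' : deriv (deriv q) t ≤ -μ/2 := hqpp t htpos (by linarith)
        have hq'le : deriv q t ≤ 0 := hq'np t htpos.le
        nlinarith
    -- log contradiction
    have hloganti : AntitoneOn (fun s => q s + k * Real.log s) (Ici s₂) := by
      apply anti_aux (f' := fun t => deriv q t + k * t⁻¹)
      · intro t ht
        have htpos : 0 < t := lt_of_lt_of_le hs₂ ht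
        exact (hdq t).add ((Real.hasDerivAt_log htpos.ne').const_mul k)
      · intro t ht
        have htpos : 0 < t := lt_trans hs₂ ht
        have h := hbar t ht.le
        have hti : t * t⁻¹ = 1 := mul_inv_cancel₀ htpos.ne'
        nlinarith [h, hti, htpos]
    obtain ⟨T, hTdef⟩ : ∃ T : ℝ, T = max s₂ (Real.exp ((q s₂ + k * Real.log s₂) / k)) + 1 := ⟨_, rfl⟩
    have hmax : max s₂ (Real.exp ((q s₂ + k * Real.log s₂) / k)) < T := by
      rw [hTdef]; linarith
    have hTs₂ : s₂ ≤ T := le_trans (le_max_left _ _) hmax.le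
    have hTpos : 0 < T := lt_of_lt_of_le hs₂ hTs₂
    have hT : q T + k * Real.log T ≤ q s₂ + k * Real.log s₂ :=
      hloganti (self_mem_Ici) (mem_Ici.mpr hTs₂) hTs₂
    have hTexp : Real.exp ((q s₂ + k * Real.log s₂) / k) < T :=
      lt_of_le_of_lt (le_max_right _ _) hmax
    have hlogT : (q s₂ + k * Real.log s₂) / k < Real.log T := by
      rw [← Real.exp_lt_exp, Real.exp_log hTpos]
      exact hTexp
    have hfin : q s₂ + k * Real.log s₂ < k * Real.log T := by
      rw [div_lt_iff₀ hk] at hlogT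
      linarith
    linarith [hpos T]
  obtain ⟨σ, hσpos, hσδ⟩ := hsigma
  obtain ⟨σ', hσ'def⟩ : ∃ σ' : ℝ, σ' = max σ 1 := ⟨_, rfl⟩
  have hσ'1 : 1 ≤ σ' := by rw [hσ'def]; exact le_max_right _ _
  have hσ'pos : 0 < σ' := lt_of_lt_of_le one_pos hσ'1
  have hσσ' : σ ≤ σ' := by rw [hσ'def]; exact le_max_left _ _
  have hqσ' : q σ' < δ :=
    lt_of_le_of_lt (hanti (mem_Ici.mpr hσpos.le)
      (mem_Ici.mpr (le_trans hσpos.le hσσ')) hσσ') hσδ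
  have hqδ : ∀ s, σ' ≤ s → q s < δ := fun s hs =>
    lt_of_le_of_lt (hanti (mem_Ici.mpr hσ'pos.le)
      (mem_Ici.mpr (le_trans hσ'pos.le hs)) hs) hqσ'
  have hδm : 3/4 * a * δ = m := by
    rw [hδdef, hmdef]; field_simp; ring
  -- second-derivative bound when R > 0
  have hq''R : ∀ s, σ' ≤ s → -(3/4) * q s < s * deriv q s → deriv (deriv q) s < -m := by
    intro s hs hR
    rw [hq2 s]
    have hqs := hpos s
    have hqsδ := hqδ s hs
    have h1 : -(a * s * deriv q s) < 3/4 * a * q s := by nlinarith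
    have h2 : -(s * deriv q s) / (3 * q s) < 1/4 := by
      rw [div_lt_iff₀ (by positivity)]
      nlinarith
    have h3 : 3/4 * a * q s < m := by nlinarith
    ring_nf at h1 h2 ⊢
    linarith [h1, h2, h3]
  -- existence of a point where R ≤ 0
  have hex : ∃ s₁, σ' ≤ s₁ ∧ q s₁/4 + s₁ * deriv q s₁/3 ≤ 0 := by
    by_contra hcon
    push_neg at hcon
    have hR : ∀ s, σ' ≤ s → -(3/4) * q s < s * deriv q s := by
      intro s hs
      have := hcon s hs
      linarith
    have hq'' : ∀ s, σ' ≤ s → deriv (deriv q) s < -m := fun s hs => hq''R s hs (hR s hs)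
    have hw1 : AntitoneOn (fun s => deriv q s + m * (s - σ')) (Ici σ') := by
      apply anti_aux (f' := fun t => deriv (deriv q) t + m)
      · intro t _
        have h2 : HasDerivAt (fun s : ℝ => m * (s - σ')) m t := by
          simpa using ((hasDerivAt_id t).sub_const σ').const_mul m
        exact (hdq' t).add h2
      · intro t ht
        linarith [hq'' t ht.le]
    have hq'bd : ∀ s, σ' ≤ s → deriv q s ≤ -m * (s - σ') := by
      intro s hs
      have h5 := hw1 self_mem_Ici (mem_Ici.mpr hs) hs
      have h0 : deriv q σ' ≤ 0 := hq'np σ' hσ'pos.le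
      simp only [sub_self, mul_zero, add_zero] at h5
      linarith
    have hw2 : AntitoneOn (fun s => q s + m * (s - σ')^2/2) (Ici σ') := by
      apply anti_aux (f' := fun t => deriv q t + m * (t - σ'))
      · intro t _
        have h2 : HasDerivAt (fun s : ℝ => m * (s - σ')^2/2) (m * (t - σ')) t := by
          have h3 : HasDerivAt (fun s : ℝ => (s - σ')^2) (2*(t - σ')) t := by
            simpa using ((hasDerivAt_id t).sub_const σ').fun_pow 2
          have h4 := (h3.const_mul m).div_const 2
          exact h4.congr_deriv (by ring)
        exact (hdq t).add h2
      · intro t ht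
        linarith [hq'bd t ht.le]
    obtain ⟨T, hTdef⟩ : ∃ T : ℝ, T = σ' + Real.sqrt (2 * q σ' / m) + 1 := ⟨_, rfl⟩
    have hTσ' : σ' ≤ T := by
      rw [hTdef]
      have := Real.sqrt_nonneg (2 * q σ' / m)
      linarith
    have hT2 : 2 * q σ' / m < (T - σ')^2 := by
      have h0 : 0 ≤ 2 * q σ' / m := by
        have := (hpos σ').le
        positivity
      have h1 := Real.sq_sqrt h0
      rw [hTdef]
      nlinarith [Real.sqrt_nonneg (2 * q σ' / m)]
    have hT3 : q σ' < m * (T - σ')^2/2 := by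
      rw [div_lt_iff₀ hm] at hT2
      nlinarith
    have h6 := hw2 self_mem_Ici (mem_Ici.mpr hTσ') hTσ'
    simp only [sub_self] at h6
    have h7 : (0:ℝ)^2 = 0 := by norm_num
    rw [h7] at h6
    simp only [mul_zero, zero_div, add_zero] at h6
    linarith [hpos T]
  obtain ⟨s₁, hs₁σ', hRs₁⟩ := hex
  have hs₁pos : 0 < s₁ := lt_of_lt_of_le hσ'pos hs₁σ'
  -- barrier : R ≤ 0 on [s₁, ∞)
  have hRbar : ∀ s, s₁ ≤ s → q s/4 + s * deriv q s/3 ≤ 0 := by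
    apply barrier (f' := fun t => deriv q t/4 + (deriv q t + t * deriv (deriv q) t)/3)
    · intro t
      have h1 : HasDerivAt (fun s : ℝ => s * deriv q s) (deriv q t + t * deriv (deriv q) t) t := by
        have h0 := (hasDerivAt_id t).fun_mul (hdq' t)
        simp only [id_eq, one_mul] at h0
        convert h0 using 1 <;> ring
      exact ((hdq t).div_const 4).add (h1.div_const 3)
    · exact hRs₁
    · intro t ht hft
      have htσ' : σ' ≤ t := le_trans hs₁σ' ht
      have htpos : 0 < t := lt_of_lt_of_le hs₁pos ht
      have htq : t * deriv q t = -(3/4) * q t := by linarith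
      have hqs := hpos t
      have hqsδ := hqδ t htσ'
      have hq'le : deriv q t ≤ 0 := hq'np t htpos.le
      have hq'' : deriv (deriv q) t ≤ -m := by
        rw [hq2 t]
        have hdiv2 : t * deriv q t / (3 * q t) = -(1/4) := by
          rw [htq]; field_simp
        have h4 : a * (t * deriv q t) = a * (-(3/4) * q t) := by rw [htq]
        have h3 : 3/4 * a * q t < m := by nlinarith
        ring_nf at hdiv2 h4 ⊢
        linarith [hdiv2, h4, h3]
      nlinarith [hq'', hq'le, htpos, hm]
  -- decay : s^(3/4) * q s is antitone on [s₁, ∞)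
  have hganti : AntitoneOn (fun s => s ^ ((3:ℝ)/4) * q s) (Ici s₁) := by
    apply anti_aux (f' := fun t => (3:ℝ)/4 * t^((3:ℝ)/4 - 1) * q t + t^((3:ℝ)/4) * deriv q t)
    · intro t ht
      have htpos : 0 < t := lt_of_lt_of_le hs₁pos ht
      exact (Real.hasDerivAt_rpow_const (Or.inl htpos.ne')).mul (hdq t)
    · intro t ht
      have htpos : 0 < t := lt_trans hs₁pos ht
      have hR := hRbar t ht.le
      have hsplit : t ^ ((3:ℝ)/4 - 1) = t ^ ((3:ℝ)/4) / t := by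
        rw [Real.rpow_sub htpos, Real.rpow_one]
      have hfac : (3:ℝ)/4 * t^((3:ℝ)/4-1) * q t + t^((3:ℝ)/4) * deriv q t
          = t^((3:ℝ)/4-1) * 3 * (q t/4 + t * deriv q t/3) := by
        rw [hsplit]; field_simp
      rw [hfac]
      exact mul_nonpos_of_nonneg_of_nonpos (by positivity) hR
  obtain ⟨C, hCdef⟩ : ∃ C : ℝ, C = s₁ ^ ((3:ℝ)/4) * q s₁ := ⟨_, rfl⟩
  have hbound : ∀ s, s₁ ≤ s → q s ^ 2 ≤ C^2 * s ^ (-(3:ℝ)/2) := by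
    intro s hs
    have hspos : 0 < s := lt_of_lt_of_le hs₁pos hs
    have hg : s ^ ((3:ℝ)/4) * q s ≤ C := by
      rw [hCdef]
      exact hganti self_mem_Ici (mem_Ici.mpr hs) hs
    have hC0 : 0 ≤ s ^ ((3:ℝ)/4) * q s := by
      have := (hpos s).le
      positivity
    have hsq : (s ^ ((3:ℝ)/4) * q s)^2 ≤ C^2 := by
      apply pow_le_pow_left₀ hC0 hg
    have h32 : (s ^ ((3:ℝ)/4))^2 = s ^ ((3:ℝ)/2) := by
      rw [← Real.rpow_natCast (s ^ ((3:ℝ)/4)) 2, ← Real.rpow_mul hspos.le]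
      norm_num
    have hply : q s^2 * s ^ ((3:ℝ)/2) ≤ C^2 := by
      calc q s^2 * s ^ ((3:ℝ)/2) = (s ^ ((3:ℝ)/4) * q s)^2 := by rw [← h32]; ring
        _ ≤ C^2 := hsq
    have hne : (0:ℝ) < s ^ ((3:ℝ)/2) := Real.rpow_pos_of_pos hspos _
    have hinv : s ^ (-(3:ℝ)/2) = (s ^ ((3:ℝ)/2))⁻¹ := by
      rw [← Real.rpow_neg hspos.le]
      norm_num
    rw [hinv, ← div_eq_mul_inv, le_div_iff₀ hne]
    linarith
  have hcontq : Continuous fun s : ℝ => q s ^ 2 := hq1.continuous.pow 2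
  have h1 : IntegrableOn (fun s : ℝ => q s ^ 2) (Icc 0 s₁) := hcontq.integrableOn_Icc
  have h2 : IntegrableOn (fun s : ℝ => q s ^ 2) (Ioi s₁) := by
    have hrint : IntegrableOn (fun s : ℝ => C^2 * s ^ (-(3:ℝ)/2)) (Ioi s₁) :=
      (integrableOn_Ioi_rpow_of_lt (by norm_num) hs₁pos).const_mul (C^2)
    apply Integrable.mono' hrint (hcontq.aestronglyMeasurable.restrict)
    filter_upwards [ae_restrict_mem measurableSet_Ioi] with s hs
    rw [Real.norm_eq_abs, abs_of_nonneg (by positivity)]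
    exact hbound s (le_of_lt hs)
  apply (h1.union h2).mono_set
  intro s hs
  rcases le_or_gt s s₁ with h | h
  · exact Or.inl ⟨hs, h⟩
  · exact Or.inr h

theorem stmt_7 (a μ A : ℝ) (ha : 0 < a) (hμ : 1 / 3 < μ) (hA : 0 < A)
    (q : ℝ → ℝ) (hq : ContDiff ℝ 2 q)
    (hode : ∀ s : ℝ, deriv (deriv q) s * q s + a * s * deriv q s * q s
      + μ * q s + (1 / 3) * s * deriv q s = 0)
    (hq0 : q 0 = A) (hq0' : deriv q 0 = 0)
    (hpos : ∀ s : ℝ, 0 < q s) :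
    Integrable (fun s : ℝ => q s ^ 2) := by
  have hright : IntegrableOn (fun s : ℝ => q s ^ 2) (Ici 0) :=
    key a μ ha hμ q hq hode hq0' hpos
  -- reflected function
  have hrq : ContDiff ℝ 2 (fun s : ℝ => q (-s)) := hq.comp contDiff_neg
  have hr1 : ∀ s : ℝ, deriv (fun s : ℝ => q (-s)) s = -deriv q (-s) := fun s =>
    deriv_comp_neg q s
  have hr2 : ∀ s : ℝ, deriv (deriv (fun s : ℝ => q (-s))) s = deriv (deriv q) (-s) := by
    intro s
    have h : deriv (fun s : ℝ => q (-s)) = fun s => -deriv q (-s) := funext hr1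
    rw [h]
    have h2 : (fun s : ℝ => -deriv q (-s)) = fun s : ℝ => -((fun u => deriv q (-u)) s) := rfl
    rw [h2, deriv.fun_neg, deriv_comp_neg]
    ring
  have hrode : ∀ s : ℝ, deriv (deriv (fun s : ℝ => q (-s))) s * (fun s : ℝ => q (-s)) s
      + a * s * deriv (fun s : ℝ => q (-s)) s * (fun s : ℝ => q (-s)) s
      + μ * (fun s : ℝ => q (-s)) s + (1 / 3) * s * deriv (fun s : ℝ => q (-s)) s = 0 := by
    intro s
    simp only [hr1, hr2]
    have h := hode (-s)
    ring_nf at h ⊢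
    linarith
  have hr0' : deriv (fun s : ℝ => q (-s)) 0 = 0 := by
    rw [hr1 0, neg_zero, hq0', neg_zero]
  have hrpos : ∀ s : ℝ, 0 < (fun s : ℝ => q (-s)) s := fun s => hpos (-s)
  have hneg : IntegrableOn (fun s : ℝ => q (-s) ^ 2) (Ici 0) :=
    key a μ ha hμ (fun s => q (-s)) hrq hrode hr0' hrpos
  have hleft : IntegrableOn (fun s : ℝ => q s ^ 2) (Iic 0) := by
    have h := (MeasurePreserving.integrableOn_comp_preimage
      (Measure.measurePreserving_neg (volume : Measure ℝ))
      (Homeomorph.neg ℝ).measurableEmbedding).2 hneg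
    have h2 : ((fun s : ℝ => q (-s) ^ 2) ∘ Neg.neg) = fun s : ℝ => q s ^ 2 := by
      funext x; simp
    have h3 : (Neg.neg ⁻¹' (Ici (0:ℝ))) = Iic 0 := by ext x; simp
    rw [h2, h3] at h
    exact h
  rw [← integrableOn_univ, ← Set.Iic_union_Ici (a := (0:ℝ))]
  exact hleft.union hright
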